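/- arXiv:2411.02678 — 3 statements merged into one kernel-verified Lean document; each statement's English description precedes it below -/
import Mathlib

section
/- If τ_r = 1/(2 + D - r) for r = 1,...,D, then γ_D := Σ_{r=1}^D (1-τ_r) τ_r ∏_{k=1}^{r-1} (1-τ_k)^2 equals D/(2(1+D)). -/
open Finset

/-- If τ_r = 1/(2+D-r), then γ_D = Σ_{r=1}^D (1-τ_r)τ_r ∏_{k=1}^{r-1}(1-τ_k)^2 = D/(2(1+D)). -/
theorem stmt_0 (D : ℕ) (hD : 0 < D) (τ : ℕ → ℝ)
    (hτ : ∀ r, 1 ≤ r → r ≤ D → τ r = 1 / (2 + (D : ℝ) - r)) :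
    ∑ r ∈ Finset.Icc 1 D,
        (1 - τ r) * τ r * ∏ k ∈ Finset.Icc 1 (r - 1), (1 - τ k) ^ 2
      = (D : ℝ) / (2 * (1 + D)) := by
  have hD1 : (1 : ℝ) + D ≠ 0 := by positivity
  have hprod : ∀ r, r ≤ D →
      ∏ k ∈ Finset.Icc 1 r, (1 - τ k) = (1 + (D : ℝ) - r) / (1 + D) := by
    intro r
    induction r with
    | zero => intro _; simp [hD1]
    | succ n ih =>
      intro hr
      have hn : n ≤ D := Nat.le_of_succ_le hr
      have hnR : (n : ℝ) ≤ D := by exact_mod_cast hn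
      have h2 : (1 : ℝ) + D - n ≠ 0 := by linarith
      rw [Finset.prod_Icc_succ_top (Nat.succ_le_succ (Nat.zero_le n)), ih hn,
        hτ (n + 1) (by omega) hr]
      push_cast
      have h2' : (2 : ℝ) + D - (n + 1) ≠ 0 := by linarith
      field_simp
      ring
  have hterm : ∀ r ∈ Finset.Icc 1 D,
      (1 - τ r) * τ r * ∏ k ∈ Finset.Icc 1 (r - 1), (1 - τ k) ^ 2
        = (1 + (D : ℝ) - r) / ((1 + D) ^ 2) := by
    intro r hr
    simp only [Finset.mem_Icc] at hr
    obtain ⟨hr1, hrD⟩ := hr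
    have hrm : r - 1 ≤ D := by omega
    have hrR : (r : ℝ) ≤ D := by exact_mod_cast hrD
    have hrR1 : (1 : ℝ) ≤ r := by exact_mod_cast hr1
    have hcast : ((r - 1 : ℕ) : ℝ) = (r : ℝ) - 1 := by
      push_cast [hr1]; ring
    have h2 : (2 : ℝ) + D - r ≠ 0 := by linarith
    rw [Finset.prod_pow, hprod (r - 1) hrm, hτ r hr1 hrD, hcast]
    have h3 : (1 : ℝ) + D - ((r : ℝ) - 1) = 2 + D - r := by ring
    rw [h3]
    field_simp
    ring
  rw [Finset.sum_congr rfl hterm, ← Finset.sum_div]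
  have hsum : ∑ r ∈ Finset.Icc 1 D, (1 + (D : ℝ) - r)
      = (D : ℝ) * (1 + D) / 2 := by
    have hnat : (∑ r ∈ Finset.Icc 1 D, r) * 2 = D * (D + 1) := by
      have h := Finset.sum_range_id_mul_two (D + 1)
      have : Finset.range (D + 1) = insert 0 (Finset.Icc 1 D) := by
        ext x; simp [Finset.mem_range, Finset.mem_Icc]; omega
      rw [this, Finset.sum_insert (by simp)] at h
      simpa [Nat.mul_comm] using h
    have hR : ((∑ r ∈ Finset.Icc 1 D, r : ℕ) : ℝ) * 2 = (D : ℝ) * (D + 1) := by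
      exact_mod_cast hnat
    push_cast at hR
    rw [Finset.sum_sub_distrib, Finset.sum_const, Nat.card_Icc]
    simp only [Nat.add_sub_cancel, nsmul_eq_mul]
    linarith
  rw [hsum]
  field_simp
end

section
/- For real parameters τ_1,...,τ_D ∈ [0,1], define γ_D = ω_{D-1} + (1/3)∏_{k=1}^{D-1}(1-τ_k)^2 where ω_d = Σ_{r=1}^d ∏_{k=1}^{r-1}(1-τ_k)^2 (1-τ_r)τ_r. Then the maximum of γ_D over all choices of τ_1,...,τ_{D-1} equals (D+1)/(2(D+2)). -/
open Finset

private lemma quad_le (a t : ℝ) (ha : 1 ≤ a) :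
    (1 - t) * t + (a / (2 * (a + 1))) * (1 - t) ^ 2 ≤ (a + 1) / (2 * ((a + 1) + 1)) := by
  have h1 : (0:ℝ) < a + 1 := by linarith
  have h2 : (0:ℝ) < a + 2 := by linarith
  have key : (a + 1) / (2 * ((a + 1) + 1)) - ((1 - t) * t + (a / (2 * (a + 1))) * (1 - t) ^ 2)
      = ((a + 2) * t - 1) ^ 2 / (2 * (a + 1) * (a + 2)) := by
    field_simp
    ring
  nlinarith [sq_nonneg ((a + 2) * t - 1), div_nonneg (sq_nonneg ((a + 2) * t - 1))
    (le_of_lt (by positivity : (0:ℝ) < 2 * (a + 1) * (a + 2)))]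

private lemma quad_eq (a : ℝ) (ha : 1 ≤ a) :
    (1 - 1 / (a + 2)) * (1 / (a + 2)) + (a / (2 * (a + 1))) * (1 - 1 / (a + 2)) ^ 2
      = (a + 1) / (2 * ((a + 1) + 1)) := by
  have h1 : (a:ℝ) + 1 ≠ 0 := by linarith
  have h2 : (a:ℝ) + 2 ≠ 0 := by linarith
  field_simp
  ring

private lemma key : ∀ n : ℕ, ∀ a : ℝ, 1 ≤ a →
    IsGreatest
      { γ : ℝ | ∃ τ : ℕ → ℝ, (∀ k, τ k ∈ Set.Icc (0 : ℝ) 1) ∧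
          γ = (∑ r ∈ Finset.Icc 1 n,
                  (∏ k ∈ Finset.Icc 1 (r - 1), (1 - τ k) ^ 2) * (1 - τ r) * τ r)
              + (a / (2 * (a + 1))) * ∏ k ∈ Finset.Icc 1 n, (1 - τ k) ^ 2 }
      ((a + n) / (2 * (a + n + 1))) := by
  intro n
  induction n with
  | zero =>
    intro a ha
    constructor
    · exact ⟨fun _ => 0, fun k => ⟨le_rfl, zero_le_one⟩, by simp⟩
    · rintro γ ⟨τ, hτ, rfl⟩
      simp
  | succ n ih =>
    intro a ha
    have ha1 : (1:ℝ) ≤ a + 1 := by linarith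
    have ha2 : (0:ℝ) < a + 2 := by linarith
    obtain ⟨⟨τ, hτ, hval⟩, hub⟩ := ih (a + 1) ha1
    constructor
    · -- membership
      set τ' : ℕ → ℝ := Function.update τ (n + 1) (1 / (a + 2)) with hτ'def
      have hτ'mem : ∀ k, τ' k ∈ Set.Icc (0:ℝ) 1 := by
        intro k
        by_cases hk : k = n + 1
        · subst hk
          simp only [τ', Function.update_self]
          constructor
          · positivity
          · rw [div_le_one ha2]; linarith
        · simp only [τ', Function.update_of_ne hk]
          exact hτ k
      have hsmall : ∀ k ∈ Finset.Icc 1 n, τ' k = τ k := by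
        intro k hk
        have := (Finset.mem_Icc.mp hk).2
        exact Function.update_of_ne (by omega) _ _
      have hS : (∑ r ∈ Finset.Icc 1 n,
              (∏ k ∈ Finset.Icc 1 (r - 1), (1 - τ' k) ^ 2) * (1 - τ' r) * τ' r)
          = (∑ r ∈ Finset.Icc 1 n,
              (∏ k ∈ Finset.Icc 1 (r - 1), (1 - τ k) ^ 2) * (1 - τ r) * τ r) := by
        refine Finset.sum_congr rfl ?_
        intro r hr
        have hr2 := Finset.mem_Icc.mp hr
        rw [hsmall r hr]
        congr 2
        refine Finset.prod_congr rfl ?_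
        intro k hk
        have hk2 := Finset.mem_Icc.mp hk
        rw [hsmall k (Finset.mem_Icc.mpr ⟨hk2.1, by omega⟩)]
      have hP : (∏ k ∈ Finset.Icc 1 n, (1 - τ' k) ^ 2)
          = ∏ k ∈ Finset.Icc 1 n, (1 - τ k) ^ 2 := by
        refine Finset.prod_congr rfl ?_
        intro k hk
        rw [hsmall k hk]
      refine ⟨τ', hτ'mem, ?_⟩
      rw [Finset.sum_Icc_succ_top (by omega : 1 ≤ n + 1),
          Finset.prod_Icc_succ_top (by omega : 1 ≤ n + 1)]
      have hidx : n + 1 - 1 = n := by omega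
      rw [hidx, hS, hP]
      have htv : τ' (n + 1) = 1 / (a + 2) := Function.update_self _ _ _
      rw [htv]
      have hq := quad_eq a ha
      push_cast
      linear_combination hval - (∏ k ∈ Finset.Icc 1 n, (1 - τ k) ^ 2) * hq
    · -- upper bound
      rintro γ ⟨σ, hσ, rfl⟩
      rw [Finset.sum_Icc_succ_top (by omega : 1 ≤ n + 1),
          Finset.prod_Icc_succ_top (by omega : 1 ≤ n + 1)]
      have hidx : n + 1 - 1 = n := by omega
      rw [hidx]
      set Ps : ℝ := ∏ k ∈ Finset.Icc 1 n, (1 - σ k) ^ 2 with hPs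
      set Ss : ℝ := ∑ r ∈ Finset.Icc 1 n,
          (∏ k ∈ Finset.Icc 1 (r - 1), (1 - σ k) ^ 2) * (1 - σ r) * σ r with hSs
      have hPs0 : 0 ≤ Ps := Finset.prod_nonneg (fun k _ => sq_nonneg _)
      have hql := quad_le a (σ (n+1)) ha
      have hmem : Ss + ((a + 1) / (2 * ((a + 1) + 1))) * Ps ∈
          { γ : ℝ | ∃ τ : ℕ → ℝ, (∀ k, τ k ∈ Set.Icc (0 : ℝ) 1) ∧
            γ = (∑ r ∈ Finset.Icc 1 n,
                    (∏ k ∈ Finset.Icc 1 (r - 1), (1 - τ k) ^ 2) * (1 - τ r) * τ r)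
                + ((a + 1) / (2 * ((a + 1) + 1))) * ∏ k ∈ Finset.Icc 1 n, (1 - τ k) ^ 2 } :=
        ⟨σ, hσ, rfl⟩
      have hb := hub hmem
      have hmul := mul_le_mul_of_nonneg_left hql hPs0
      push_cast
      calc Ss + Ps * (1 - σ (n + 1)) * σ (n + 1)
            + a / (2 * (a + 1)) * (Ps * (1 - σ (n + 1)) ^ 2)
          = Ss + Ps * ((1 - σ (n + 1)) * σ (n + 1)
              + a / (2 * (a + 1)) * (1 - σ (n + 1)) ^ 2) := by ring
        _ ≤ Ss + Ps * ((a + 1) / (2 * ((a + 1) + 1))) := by linarith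
        _ = Ss + (a + 1) / (2 * ((a + 1) + 1)) * Ps := by ring
        _ ≤ (a + 1 + (n : ℝ)) / (2 * (a + 1 + (n : ℝ) + 1)) := hb
        _ = (a + ((n : ℝ) + 1)) / (2 * (a + ((n : ℝ) + 1) + 1)) := by ring_nf

/-- The maximum of γ_D = ω_{D-1} + (1/3)∏_{k=1}^{D-1}(1-τ_k)^2 over τ ∈ [0,1]
equals (D+1)/(2(D+2)), where ω_d = Σ_{r=1}^d ∏_{k=1}^{r-1}(1-τ_k)^2 (1-τ_r)τ_r. -/
theorem stmt_2 (D : ℕ) (hD : 0 < D) :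
    IsGreatest
      { γ : ℝ | ∃ τ : ℕ → ℝ, (∀ k, τ k ∈ Set.Icc (0 : ℝ) 1) ∧
          γ = (∑ r ∈ Finset.Icc 1 (D - 1),
                  (∏ k ∈ Finset.Icc 1 (r - 1), (1 - τ k) ^ 2) * (1 - τ r) * τ r)
              + (1 / 3) * ∏ k ∈ Finset.Icc 1 (D - 1), (1 - τ k) ^ 2 }
      ((D + 1 : ℝ) / (2 * (D + 2))) := by
  have h := key (D - 1) 2 (by norm_num)
  have hc : ((D - 1 : ℕ) : ℝ) = (D : ℝ) - 1 := by
    rw [Nat.cast_sub hD]; norm_num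
  have hval : ((2 : ℝ) + ((D - 1 : ℕ) : ℝ)) / (2 * (2 + ((D - 1 : ℕ) : ℝ) + 1))
      = ((D : ℝ) + 1) / (2 * ((D : ℝ) + 2)) := by
    rw [hc]; ring_nf
  rw [hval] at h
  convert h using 3 with γ
  norm_num
end

section
/- Let τ_1,...,τ_D ∈ [0,1) with x_r = ∏_{j=1}^r(1-τ_j) > 0, γ_{D,r} = x_r[(1-x_r)^{M-2} - (1-x_{r-1})^{M-2}], γ_D = Σ_r γ_{D,r}, and β_D = Σ_r γ_{D,r} x_r. Then γ_D^2 ≤ β_D. -/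
open Finset

/-- With γ_D = Σ_r γ_{D,r} and β_D = Σ_r γ_{D,r} x_r, one has γ_D² ≤ β_D. -/
theorem stmt_7 (D M : ℕ) (hD : 0 < D) (hM : 3 ≤ M) (τ : ℕ → ℝ)
    (hτ : ∀ j, τ j ∈ Set.Ico (0 : ℝ) 1)
    (x : ℕ → ℝ) (hx : ∀ r, x r = ∏ j ∈ Finset.Icc 1 r, (1 - τ j))
    (hxpos : ∀ r ≤ D, 0 < x r)
    (γr : ℕ → ℝ)
    (hγr : ∀ r, γr r = x r * ((1 - x r) ^ (M - 2) - (1 - x (r - 1)) ^ (M - 2))) :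
    (∑ r ∈ Finset.Icc 1 D, γr r) ^ 2 ≤ ∑ r ∈ Finset.Icc 1 D, γr r * x r := by
  have hτ0 : ∀ j, 0 ≤ 1 - τ j := fun j => by have := (hτ j).2; linarith
  have hτ1 : ∀ j, 1 - τ j ≤ 1 := fun j => by have := (hτ j).1; linarith
  have hx1 : ∀ r, x r ≤ 1 := by
    intro r; rw [hx r]
    exact Finset.prod_le_one (fun j _ => hτ0 j) (fun j _ => hτ1 j)
  have hx0 : x 0 = 1 := by simp [hx 0]
  have hxstep : ∀ r : ℕ, x (r + 1) = x r * (1 - τ (r + 1)) := by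
    intro r
    rw [hx (r + 1), hx r, Finset.prod_Icc_succ_top (Nat.le_add_left 1 r)]
  have hM2 : 1 ≤ M - 2 := by omega
  -- γr is nonnegative on Icc 1 D
  have hγ0 : ∀ r ∈ Finset.Icc 1 D, 0 ≤ γr r := by
    intro r hr
    obtain ⟨hr1, hrD⟩ := Finset.mem_Icc.mp hr
    obtain ⟨s, rfl⟩ : ∃ s, r = s + 1 := ⟨r - 1, by omega⟩
    have hxs : 0 < x s := hxpos s (by omega)
    have hxr : 0 < x (s + 1) := hxpos _ hrD
    have hle : x (s + 1) ≤ x s := by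
      rw [hxstep s]
      calc x s * (1 - τ (s + 1)) ≤ x s * 1 :=
        mul_le_mul_of_nonneg_left (hτ1 _) hxs.le
      _ = x s := mul_one _
    have h1 : 0 ≤ 1 - x s := by have := hx1 s; linarith
    have hpow : (1 - x s) ^ (M - 2) ≤ (1 - x (s + 1)) ^ (M - 2) :=
      pow_le_pow_left₀ h1 (by linarith) _
    rw [hγr]
    simp only [Nat.add_sub_cancel]
    have : 0 ≤ (1 - x (s + 1)) ^ (M - 2) - (1 - x s) ^ (M - 2) := by linarith
    positivity
  -- telescoping sum
  have htel : ∀ n : ℕ,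
      ∑ r ∈ Finset.Icc 1 n, ((1 - x r) ^ (M - 2) - (1 - x (r - 1)) ^ (M - 2))
        = (1 - x n) ^ (M - 2) - (1 - x 0) ^ (M - 2) := by
    intro n
    induction n with
    | zero => simp
    | succ k ih =>
      rw [Finset.sum_Icc_succ_top (Nat.le_add_left 1 k), ih]
      simp only [Nat.add_sub_cancel]
      ring
  have hsum_div : ∑ r ∈ Finset.Icc 1 D, γr r / x r ≤ 1 := by
    have heq : ∑ r ∈ Finset.Icc 1 D, γr r / x r
        = ∑ r ∈ Finset.Icc 1 D, ((1 - x r) ^ (M - 2) - (1 - x (r - 1)) ^ (M - 2)) := by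
      refine Finset.sum_congr rfl fun r hr => ?_
      have hxr : 0 < x r := hxpos r (Finset.mem_Icc.mp hr).2
      rw [hγr]; field_simp
    rw [heq, htel D, hx0]
    simp only [sub_self]
    rw [zero_pow (by omega), sub_zero]
    have hxD : 0 < x D := hxpos D le_rfl
    have : 0 ≤ 1 - x D := by have := hx1 D; linarith
    calc (1 - x D) ^ (M - 2) ≤ 1 ^ (M - 2) := pow_le_pow_left₀ this (by linarith) _
    _ = 1 := one_pow _
  -- Cauchy-Schwarz
  have hCS := Finset.sum_mul_sq_le_sq_mul_sq (Finset.Icc 1 D)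
    (fun r => Real.sqrt (γr r * x r)) (fun r => Real.sqrt (γr r / x r))
  have hprod : ∀ r ∈ Finset.Icc 1 D,
      Real.sqrt (γr r * x r) * Real.sqrt (γr r / x r) = γr r := by
    intro r hr
    have hxr : 0 < x r := hxpos r (Finset.mem_Icc.mp hr).2
    have hg := hγ0 r hr
    rw [← Real.sqrt_mul (by positivity)]
    have : γr r * x r * (γr r / x r) = γr r ^ 2 := by field_simp
    rw [this, Real.sqrt_sq hg]
  have hsq1 : ∀ r ∈ Finset.Icc 1 D, Real.sqrt (γr r * x r) ^ 2 = γr r * x r := by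
    intro r hr
    exact Real.sq_sqrt (mul_nonneg (hγ0 r hr) (hxpos r (Finset.mem_Icc.mp hr).2).le)
  have hsq2 : ∀ r ∈ Finset.Icc 1 D, Real.sqrt (γr r / x r) ^ 2 = γr r / x r := by
    intro r hr
    exact Real.sq_sqrt (div_nonneg (hγ0 r hr) (hxpos r (Finset.mem_Icc.mp hr).2).le)
  rw [Finset.sum_congr rfl hprod, Finset.sum_congr rfl hsq1, Finset.sum_congr rfl hsq2]
    at hCS
  have hβ0 : 0 ≤ ∑ r ∈ Finset.Icc 1 D, γr r * x r :=
    Finset.sum_nonneg fun r hr => mul_nonneg (hγ0 r hr) (hxpos r (Finset.mem_Icc.mp hr).2).le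
  calc (∑ r ∈ Finset.Icc 1 D, γr r) ^ 2
      ≤ (∑ r ∈ Finset.Icc 1 D, γr r * x r) * ∑ r ∈ Finset.Icc 1 D, γr r / x r := hCS
    _ ≤ (∑ r ∈ Finset.Icc 1 D, γr r * x r) * 1 :=
        mul_le_mul_of_nonneg_left hsum_div hβ0
    _ = _ := mul_one _
end
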